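/- Let n ≥ 3, α ∈ (0, n-2), C > 0 with α < n - 2 - C/2, and ε > 0. Define u(ρ,t) = (ρ² + Ct)^{-α/2} + ε ρ^{2-n} for ρ > 0, t ≥ 0. Then w(x,t) = u(|x|, t) satisfies -∂_t w + Δw < 0 for x ∈ ℝ^n \ {0} and t > 0; i.e. w is a strict supersolution of the heat equation on ℝ^n \ {0}. -/

import Mathlib

open scoped BigOperators

open scoped BigOperators

lemma hasFDerivAt_sumsq (n : ℕ) (y : EuclideanSpace ℝ (Fin n)) :
    HasFDerivAt (fun y : EuclideanSpace ℝ (Fin n) => ∑ i, y i ^ 2)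
      (∑ i : Fin n, ((2:ℝ) * y i) • (EuclideanSpace.proj i : EuclideanSpace ℝ (Fin n) →L[ℝ] ℝ)) y := by
  refine HasFDerivAt.fun_sum (fun i _ => ?_)
  have h := (EuclideanSpace.proj i : EuclideanSpace ℝ (Fin n) →L[ℝ] ℝ).hasFDerivAt (x := y)
  have h2 := h.fun_mul h
  have e : (fun y : EuclideanSpace ℝ (Fin n) => y i ^ 2)
      = fun y : EuclideanSpace ℝ (Fin n) =>
        (EuclideanSpace.proj i : EuclideanSpace ℝ (Fin n) →L[ℝ] ℝ) y
          * (EuclideanSpace.proj i : EuclideanSpace ℝ (Fin n) →L[ℝ] ℝ) y := by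
    funext z; simp [sq]
  rw [e]
  refine h2.congr_fderiv ?_
  ext z
  simp [two_mul, add_smul]

lemma sumsq_eval (n : ℕ) (y : EuclideanSpace ℝ (Fin n)) (j : Fin n) :
    (∑ i : Fin n, ((2:ℝ) * y i) • (EuclideanSpace.proj i : EuclideanSpace ℝ (Fin n) →L[ℝ] ℝ))
      (EuclideanSpace.single j 1) = 2 * y j := by
  simp [ContinuousLinearMap.sum_apply, EuclideanSpace.single_apply]

lemma norm_sq_eq (n : ℕ) (y : EuclideanSpace ℝ (Fin n)) : ‖y‖ ^ 2 = ∑ i, y i ^ 2 := by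
  rw [EuclideanSpace.norm_eq, Real.sq_sqrt] <;> simp [Real.norm_eq_abs, sq_abs]
  positivity

lemma norm_rpow_eq (n : ℕ) (y : EuclideanSpace ℝ (Fin n)) (p : ℝ) :
    ‖y‖ ^ p = (∑ i, y i ^ 2) ^ (p / 2) := by
  have h0 : (0:ℝ) ≤ ∑ i : Fin n, y i ^ 2 := by positivity
  have h : ‖y‖ = (∑ i : Fin n, y i ^ 2) ^ ((1:ℝ)/2) := by
    rw [EuclideanSpace.norm_eq, Real.sqrt_eq_rpow]
    simp [Real.norm_eq_abs, sq_abs]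
  rw [h, ← Real.rpow_mul h0, show (1:ℝ)/2 * p = p/2 by ring]

/-- The Euclidean Laplacian of `u : ℝⁿ → ℝ` at `x`. -/
noncomputable def laplacian (n : ℕ) (u : EuclideanSpace ℝ (Fin n) → ℝ)
    (x : EuclideanSpace ℝ (Fin n)) : ℝ :=
  ∑ i : Fin n, fderiv ℝ (fun y => fderiv ℝ u y (EuclideanSpace.single i 1)) x
    (EuclideanSpace.single i 1)

/-- The function `w(x,t) = (|x|² + Ct)^{-α/2} + ε|x|^{2-n}` is a strict supersolution
of the heat equation on `ℝⁿ \ {0}`: `-∂_t w + Δw < 0` for `x ≠ 0`, `t > 0`,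
provided `0 < α < n-2` and `α < n - 2 - C/2`. -/
theorem supersolution_heat (n : ℕ) (hn : 3 ≤ n) (α C ε : ℝ)
    (hα : α ∈ Set.Ioo (0 : ℝ) ((n : ℝ) - 2)) (hC : 0 < C)
    (hαC : α < (n : ℝ) - 2 - C / 2) (hε : 0 < ε)
    (w : EuclideanSpace ℝ (Fin n) → ℝ → ℝ)
    (hw : ∀ x t, w x t = (‖x‖ ^ 2 + C * t) ^ (-(α / 2)) + ε * ‖x‖ ^ ((2 : ℝ) - n)) :
    ∀ (x : EuclideanSpace ℝ (Fin n)) (t : ℝ), x ≠ 0 → 0 < t →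
      -(deriv (fun τ => w x τ) t) + laplacian n (fun y => w y t) x < 0 := by
  intro x t hx ht
  obtain ⟨hα0, hα2⟩ := hα
  set p1 : ℝ := -(α/2) with hp1
  set p2 : ℝ := ((2:ℝ) - n)/2 with hp2
  set c : ℝ := C * t with hcdef
  have hc : 0 < c := mul_pos hC ht
  set s : EuclideanSpace ℝ (Fin n) → ℝ := fun y => ∑ i, y i ^ 2 with hsdef
  have hsx : 0 < s x := by
    have h1 : 0 < ‖x‖ ^ 2 := pow_pos (norm_pos_iff.mpr hx) 2
    rwa [norm_sq_eq n x] at h1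
  set F : EuclideanSpace ℝ (Fin n) → ℝ := fun y => (s y + c) ^ p1 + ε * (s y) ^ p2 with hF
  have hFw : (fun y => w y t) = F := by
    funext y
    rw [hw, hF]
    simp only [hsdef]
    rw [norm_sq_eq n y, norm_rpow_eq n y ((2:ℝ) - n)]
  -- derivative of F on the set where s is positive
  have hFd : ∀ y : EuclideanSpace ℝ (Fin n), 0 < s y →
      HasFDerivAt F ((p1 * (s y + c) ^ (p1 - 1) + ε * (p2 * s y ^ (p2 - 1))) •
        (∑ i : Fin n, ((2:ℝ) * y i) •
          (EuclideanSpace.proj i : EuclideanSpace ℝ (Fin n) →L[ℝ] ℝ))) y := by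
    intro y hy
    have hds : HasFDerivAt s (∑ i : Fin n, ((2:ℝ) * y i) •
        (EuclideanSpace.proj i : EuclideanSpace ℝ (Fin n) →L[ℝ] ℝ)) y := hasFDerivAt_sumsq n y
    have h1 := (hds.add_const c).rpow_const (p := p1) (Or.inl (add_pos hy hc).ne')
    have h2 := (hds.rpow_const (p := p2) (Or.inl hy.ne')).const_mul ε
    have h3 := h1.fun_add h2
    refine h3.congr_fderiv ?_
    ext z
    simp [smul_smul]
    ring
  -- continuity of s
  have hmem : {y : EuclideanSpace ℝ (Fin n) | 0 < s y} ∈ nhds x := by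
    have hcont : Continuous s := by
      rw [hsdef]
      exact continuous_finset_sum _ fun i _ =>
        ((EuclideanSpace.proj i : EuclideanSpace ℝ (Fin n) →L[ℝ] ℝ).continuous.pow 2)
    exact (isOpen_lt continuous_const hcont).mem_nhds hsx
  have hev : ∀ i : Fin n, (fun y => fderiv ℝ F y (EuclideanSpace.single i 1)) =ᶠ[nhds x]
      (fun y => (p1 * (s y + c) ^ (p1 - 1) + ε * (p2 * s y ^ (p2 - 1))) * (2 * y i)) := by
    intro i
    filter_upwards [hmem] with y hy
    rw [(hFd y hy).fderiv, ContinuousLinearMap.smul_apply, sumsq_eval, smul_eq_mul]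
  have hlap : ∀ i : Fin n,
      fderiv ℝ (fun y => fderiv ℝ F y (EuclideanSpace.single i 1)) x (EuclideanSpace.single i 1)
      = (p1 * (s x + c) ^ (p1 - 1) + ε * (p2 * s x ^ (p2 - 1))) * 2
        + (p1 * (p1-1) * (s x + c) ^ (p1-1-1) + ε * (p2 * (p2-1) * s x ^ (p2-1-1)))
          * (2 * x i) * (2 * x i) := by
    intro i
    rw [Filter.EventuallyEq.fderiv_eq (hev i)]
    have hds : HasFDerivAt s (∑ j : Fin n, ((2:ℝ) * x j) •
        (EuclideanSpace.proj j : EuclideanSpace ℝ (Fin n) →L[ℝ] ℝ)) x := hasFDerivAt_sumsq n x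
    have h1 := ((hds.add_const c).rpow_const (p := p1 - 1)
        (Or.inl (add_pos hsx hc).ne')).const_mul p1
    have h2 := ((hds.rpow_const (p := p2 - 1) (Or.inl hsx.ne')).const_mul p2).const_mul ε
    have hlin : HasFDerivAt (fun y : EuclideanSpace ℝ (Fin n) => 2 * y i)
        ((2:ℝ) • (EuclideanSpace.proj i : EuclideanSpace ℝ (Fin n) →L[ℝ] ℝ)) x :=
      (EuclideanSpace.proj i : EuclideanSpace ℝ (Fin n) →L[ℝ] ℝ).hasFDerivAt.const_mul 2
    have h3 := (h1.fun_add h2).fun_mul hlin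
    rw [h3.fderiv]
    simp [ContinuousLinearMap.smul_apply, sumsq_eval, EuclideanSpace.single_apply]
    ring
  -- compute the time derivative
  have hT : deriv (fun τ => w x τ) t = p1 * (s x + c) ^ (p1 - 1) * C := by
    have he : (fun τ => w x τ) = fun τ => (s x + C * τ) ^ p1 + ε * s x ^ p2 := by
      funext τ
      rw [hw, norm_sq_eq n x, norm_rpow_eq n x ((2:ℝ) - n)]
    rw [he]
    have h1 : HasDerivAt (fun τ : ℝ => s x + C * τ) C t := by
      simpa using ((hasDerivAt_id t).const_mul C).const_add (s x)
    have h2 := h1.rpow_const (p := p1) (Or.inl (by positivity : s x + C * t ≠ 0))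
    have h3 := h2.add_const (ε * s x ^ p2)
    rw [h3.deriv]
    rw [hcdef]
    ring
  -- assemble the laplacian
  rw [hFw, hT, laplacian]
  have hsum : ∑ i : Fin n, fderiv ℝ (fun y => fderiv ℝ F y (EuclideanSpace.single i 1)) x
      (EuclideanSpace.single i 1)
      = (n : ℝ) * ((p1 * (s x + c) ^ (p1 - 1) + ε * (p2 * s x ^ (p2 - 1))) * 2)
        + (p1 * (p1-1) * (s x + c) ^ (p1-1-1) + ε * (p2 * (p2-1) * s x ^ (p2-1-1))) * (4 * s x) := by
    rw [Finset.sum_congr rfl (fun i _ => hlap i), Finset.sum_add_distrib,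
      Finset.sum_const, Finset.card_univ, Fintype.card_fin, nsmul_eq_mul]
    congr 1
    rw [hsdef]
    simp only
    rw [Finset.mul_sum, Finset.mul_sum]
    exact Finset.sum_congr rfl fun i _ => by ring
  rw [hsum]
  -- final algebraic inequality
  set Q : ℝ := s x with hQdef
  set P : ℝ := Q + c with hPdef
  have hP : 0 < P := add_pos hsx hc
  have hA2 : 0 < P ^ (p1 - 1 - 1) := Real.rpow_pos_of_pos hP _
  have hB2 : 0 < Q ^ (p2 - 1 - 1) := Real.rpow_pos_of_pos hsx _
  have hA : P ^ (p1 - 1) = P ^ (p1 - 1 - 1) * P := by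
    rw [← Real.rpow_add_one hP.ne' (p1 - 1 - 1)]
    ring_nf
  have hB : Q ^ (p2 - 1) = Q ^ (p2 - 1 - 1) * Q := by
    rw [← Real.rpow_add_one hsx.ne' (p2 - 1 - 1)]
    ring_nf
  rw [hA, hB, hp1, hp2]
  have hkey : 0 < 2 * (n : ℝ) - C - (2 * α + 4) := by linarith
  nlinarith [mul_pos (mul_pos hA2 hsx) hα0, mul_pos (mul_pos hA2 hc) hα0,
    mul_pos hA2 hsx, mul_pos hA2 hc, mul_pos hB2 hsx,
    mul_pos (mul_pos hA2 hsx) hkey, mul_pos (mul_pos hA2 hc) hkey,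
    mul_pos (mul_pos (mul_pos hA2 hsx) hα0) hkey,
    mul_pos (mul_pos (mul_pos hA2 hc) hα0) hkey]
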